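/- Let T be a bijective linear operator on M_{m×n}(S) that preserves the rank of every rank-1 matrix (r(A) = 1 implies r(T(A)) = 1). Then there exist a permutation ρ of {1,…,m}, a permutation σ of {1,…,n}, and units α_{ij} of S such that either T(E_{ij}) = α_{ij} E_{ρ(i),σ(j)} for all (i,j), or m = n and T(E_{ij}) = α_{ij} E_{σ(j),ρ(i)} for all (i,j). -/

import Mathlib

open scoped Classical

/-- The semiring rank of an `m × n` matrix over `S`: the least positive `k` such that
`A = B * C` for some `m × k` matrix `B` and `k × n` matrix `C`; the rank of `0` is `0`. -/
noncomputable def matRank {S : Type*} [CommSemiring S] {m n : ℕ}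
    (A : Matrix (Fin m) (Fin n) S) : ℕ :=
  if A = 0 then 0
  else sInf {k : ℕ | 0 < k ∧
    ∃ (B : Matrix (Fin m) (Fin k) S) (C : Matrix (Fin k) (Fin n) S), A = B * C}

section Aux

private lemma pairwise_line {m n k : ℕ} (f : Fin k → Fin m × Fin n)
    (hinj : Function.Injective f) (hk : 2 ≤ k)
    (hpair : ∀ a b, (f a).1 = (f b).1 ∨ (f a).2 = (f b).2) :
    (∀ a b, (f a).1 = (f b).1) ∨ (∀ a b, (f a).2 = (f b).2) := by
  set x0 : Fin k := ⟨0, by omega⟩ with hx0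
  set x1 : Fin k := ⟨1, by omega⟩ with hx1
  have hne : x0 ≠ x1 := by simp [hx0, hx1, Fin.ext_iff]
  rcases hpair x0 x1 with h01 | h01
  · left
    have key : ∀ a, (f a).1 = (f x0).1 := by
      intro a
      rcases hpair x0 a with h | h2
      · exact h.symm
      · rcases hpair x1 a with h3 | h4
        · rw [← h3, ← h01]
        · exact absurd (hinj (Prod.ext h01 (h2.trans h4.symm))) hne
    intro a b; rw [key a, key b]
  · right
    have key : ∀ a, (f a).2 = (f x0).2 := by
      intro a
      rcases hpair x0 a with h2 | h
      · rcases hpair x1 a with h4 | h3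
        · exact absurd (hinj (Prod.ext (h2.trans h4.symm) h01)) hne
        · rw [← h3, ← h01]
      · exact h.symm
    intro a b; rw [key a, key b]

private lemma combi {m n : ℕ} (π : Fin m × Fin n → Fin m × Fin n)
    (hinj : Function.Injective π)
    (hrow : ∀ i j j', (π (i,j)).1 = (π (i,j')).1 ∨ (π (i,j)).2 = (π (i,j')).2)
    (hcol : ∀ i i' j, (π (i,j)).1 = (π (i',j)).1 ∨ (π (i,j)).2 = (π (i',j)).2) :
    (∃ (ρ : Equiv.Perm (Fin m)) (σ : Equiv.Perm (Fin n)), ∀ i j, π (i,j) = (ρ i, σ j)) ∨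
    (∃ (h : m = n) (ρ : Equiv.Perm (Fin m)) (σ : Equiv.Perm (Fin n)),
      ∀ i j, π (i,j) = (Fin.cast h.symm (σ j), Fin.cast h (ρ i))) := by
  rcases Nat.lt_or_ge m 1 with hm | hm
  · left; exact ⟨1, 1, fun i j => absurd i.2 (by omega)⟩
  rcases Nat.lt_or_ge n 1 with hn | hn
  · left; exact ⟨1, 1, fun i j => absurd j.2 (by omega)⟩
  rcases Nat.lt_or_ge n 2 with hn2 | hn2
  · -- n = 1
    have hn1 : n = 1 := by omega
    subst hn1
    left
    have hf : Function.Injective (fun i => (π (i, 0)).1) := by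
      intro i i' h
      have := hinj (a₁ := (i,0)) (a₂ := (i',0)) (Prod.ext h (Subsingleton.elim _ _))
      exact (Prod.ext_iff.mp this).1
    refine ⟨Equiv.ofBijective _ ((Finite.injective_iff_bijective).mp hf), 1, fun i j => ?_⟩
    have hj : j = 0 := Subsingleton.elim _ _
    subst hj
    exact Prod.ext rfl (Subsingleton.elim _ _)
  rcases Nat.lt_or_ge m 2 with hm2 | hm2
  · -- m = 1
    have hm1 : m = 1 := by omega
    subst hm1
    left
    have hf : Function.Injective (fun j => (π (0, j)).2) := by
      intro j j' h
      have := hinj (a₁ := (0,j)) (a₂ := (0,j')) (Prod.ext (Subsingleton.elim _ _) h)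
      exact (Prod.ext_iff.mp this).2
    refine ⟨1, Equiv.ofBijective _ ((Finite.injective_iff_bijective).mp hf), fun i j => ?_⟩
    have hi : i = 0 := Subsingleton.elim _ _
    subst hi
    exact Prod.ext (Subsingleton.elim _ _) rfl
  -- main case : m ≥ 2, n ≥ 2
  set j0 : Fin n := ⟨0, by omega⟩ with hj0def
  set j1 : Fin n := ⟨1, by omega⟩ with hj1def
  have hj01 : j0 ≠ j1 := by simp [hj0def, hj1def, Fin.ext_iff]
  have rowinj : ∀ i : Fin m, Function.Injective (fun j => π (i, j)) := by
    intro i j j' h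
    have := hinj h
    exact (Prod.ext_iff.mp this).2
  have colinj : ∀ j : Fin n, Function.Injective (fun i => π (i, j)) := by
    intro j i i' h
    have := hinj h
    exact (Prod.ext_iff.mp this).1
  have Hrow : ∀ i : Fin m, (∀ j j', (π (i,j)).1 = (π (i,j')).1) ∨
      (∀ j j', (π (i,j)).2 = (π (i,j')).2) :=
    fun i => pairwise_line _ (rowinj i) hn2 (fun a b => hrow i a b)
  have hmix : ∀ i i' : Fin m, (∀ j j', (π (i,j)).1 = (π (i,j')).1) →
      (∀ j j', (π (i',j)).2 = (π (i',j')).2) → (¬ ∀ j j', (π (i',j)).1 = (π (i',j')).1) →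
      False := by
    intro i i' hR hC hnR
    have hii : i ≠ i' := by rintro rfl; exact hnR hR
    rcases hcol i i' j0 with A0 | B0 <;> rcases hcol i i' j1 with A1 | B1
    · exact hnR (by
        intro j j'
        have h01 : (π (i', j0)).1 = (π (i', j1)).1 := by rw [← A0, ← A1, hR j0 j1]
        have key : ∀ j, (π (i', j)).1 = (π (i', j0)).1 := by
          intro j
          rcases hrow i' j0 j with h | h2
          · exact h.symm
          · rcases hrow i' j1 j with h3 | h4
            · rw [← h3, ← h01]
            · exact absurd (rowinj i' (Prod.ext h01 (h2.trans h4.symm))) hj01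
        rw [key j, key j'])
    · have h : π (i, j1) = π (i', j0) := by
        refine Prod.ext ?_ ?_
        · rw [← A0, hR j1 j0]
        · rw [B1, hC j1 j0]
      exact hii (Prod.ext_iff.mp (hinj h)).1
    · have h : π (i, j0) = π (i', j1) := by
        refine Prod.ext ?_ ?_
        · rw [← A1, hR j0 j1]
        · rw [B0, hC j0 j1]
      exact hii (Prod.ext_iff.mp (hinj h)).1
    · have h : π (i, j0) = π (i, j1) := by
        refine Prod.ext (hR j0 j1) ?_
        rw [B0, B1, hC j0 j1]
      exact hj01 (rowinj i h)
  by_cases hallR : ∀ i : Fin m, (∀ j j', (π (i,j)).1 = (π (i,j')).1)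
  · -- all rows map into rows
    left
    set ρ0 : Fin m → Fin m := fun i => (π (i, j0)).1 with hρ0
    have hfst : ∀ i j, (π (i,j)).1 = ρ0 i := fun i j => hallR i j j0
    have sndinj : ∀ i, Function.Injective (fun j => (π (i,j)).2) := by
      intro i j j' h
      exact rowinj i (Prod.ext ((hfst i j).trans (hfst i j').symm) h)
    have hρ0inj : Function.Injective ρ0 := by
      intro i i' h
      by_contra hne
      obtain ⟨j, hj⟩ := (Finite.injective_iff_surjective.mp (sndinj i)) ((π (i', j0)).2)
      have heq : π (i, j) = π (i', j0) :=
        Prod.ext (by rw [hfst i j, hfst i' j0, h]) hj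
      exact hne (Prod.ext_iff.mp (hinj heq)).1
    have hsndconst : ∀ i i' j, (π (i,j)).2 = (π (i',j)).2 := by
      intro i i' j
      rcases hcol i i' j with h | h
      · have hii : i = i' := hρ0inj (by rw [← hfst i j, ← hfst i' j, h])
        rw [hii]
      · exact h
    set i0 : Fin m := ⟨0, by omega⟩
    set σ0 : Fin n → Fin n := fun j => (π (i0, j)).2 with hσ0
    have hσ0inj : Function.Injective σ0 := sndinj i0
    refine ⟨Equiv.ofBijective ρ0 (Finite.injective_iff_bijective.mp hρ0inj),
      Equiv.ofBijective σ0 (Finite.injective_iff_bijective.mp hσ0inj), fun i j => ?_⟩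
    exact Prod.ext (hfst i j) (hsndconst i i0 j)
  · -- all rows map into columns
    obtain ⟨iC, hiC⟩ := not_forall.mp hallR
    have hiCC : ∀ j j', (π (iC,j)).2 = (π (iC,j')).2 := (Hrow iC).resolve_left hiC
    have hallC : ∀ i : Fin m, (∀ j j', (π (i,j)).2 = (π (i,j')).2) := by
      intro i
      rcases Hrow i with hR | hC
      · exact absurd (hmix i iC hR hiCC hiC) not_false
      · exact hC
    set γ : Fin m → Fin n := fun i => (π (i, j0)).2 with hγ
    have hsnd : ∀ i j, (π (i,j)).2 = γ i := fun i j => hallC i j j0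
    have fstinj : ∀ i, Function.Injective (fun j => (π (i,j)).1) := by
      intro i j j' h
      exact rowinj i (Prod.ext h ((hsnd i j).trans (hsnd i j').symm))
    have hγne : ∃ ia ib, γ ia ≠ γ ib := by
      by_contra h
      push_neg at h
      have hfinj : Function.Injective (fun p : Fin m × Fin n => (π p).1) := by
        intro p p' hp
        exact hinj (Prod.ext hp (by rw [hsnd p.1 p.2, hsnd p'.1 p'.2, h p.1 p'.1]))
      have hcard := Fintype.card_le_of_injective _ hfinj
      simp only [Fintype.card_prod, Fintype.card_fin] at hcard
      have h2 : m * 2 ≤ m * 1 := le_trans (Nat.mul_le_mul_left m hn2) (by omega)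
      have := Nat.le_of_mul_le_mul_left h2 (by omega)
      omega
    obtain ⟨ia, ib, hab⟩ := hγne
    have hcolfst : ∀ i i' j, (π (i,j)).1 = (π (i',j)).1 := by
      intro i i' j
      rcases pairwise_line (fun i => π (i, j)) (colinj j) hm2 (fun a b => hcol a b j) with
        h | h
      · exact h i i'
      · exact absurd ((hsnd ia j).symm.trans ((h ia ib).trans (hsnd ib j))) hab
    set i0 : Fin m := ⟨0, by omega⟩
    set τ : Fin n → Fin m := fun j => (π (i0, j)).1 with hτ
    have hfst : ∀ i j, (π (i,j)).1 = τ j := fun i j => hcolfst i i0 j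
    have hτinj : Function.Injective τ := fstinj i0
    have hγinj : Function.Injective γ := by
      intro i i' h
      have heq : π (i, j0) = π (i', j0) :=
        Prod.ext (by rw [hfst i j0, hfst i' j0])
          ((hsnd i j0).trans (h.trans (hsnd i' j0).symm))
      exact (Prod.ext_iff.mp (hinj heq)).1
    have hmn : m = n := le_antisymm
      (by simpa using Fintype.card_le_of_injective γ hγinj)
      (by simpa using Fintype.card_le_of_injective τ hτinj)
    right
    subst hmn
    refine ⟨rfl, Equiv.ofBijective γ (Finite.injective_iff_bijective.mp hγinj),
      Equiv.ofBijective τ (Finite.injective_iff_bijective.mp hτinj), fun i j => ?_⟩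
    refine Prod.ext ?_ ?_
    · simp [Fin.cast_refl, Equiv.ofBijective_apply, hfst i j]
    · simp [Fin.cast_refl, Equiv.ofBijective_apply, hsnd i j]

variable {S : Type*} [CommSemiring S] {m n : ℕ}

private lemma std_apply (i : Fin m) (j : Fin n) (a : S) (k : Fin m) (l : Fin n) :
    Matrix.single i j a k l = if i = k ∧ j = l then a else 0 := rfl

private lemma rank_one_iff (A : Matrix (Fin m) (Fin n) S) :
    matRank A = 1 ↔ A ≠ 0 ∧ ∃ (b : Fin m → S) (c : Fin n → S), ∀ i j, A i j = b i * c j := by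
  constructor
  · intro h
    have hA : A ≠ 0 := by
      intro h0
      rw [matRank, if_pos h0] at h
      exact absurd h (by norm_num)
    rw [matRank, if_neg hA] at h
    have hne : {k : ℕ | 0 < k ∧
        ∃ (B : Matrix (Fin m) (Fin k) S) (C : Matrix (Fin k) (Fin n) S), A = B * C}.Nonempty := by
      by_contra h'
      rw [Set.not_nonempty_iff_eq_empty] at h'
      rw [h', Nat.sInf_empty] at h
      exact absurd h (by norm_num)
    have h1 := h ▸ Nat.sInf_mem hne
    obtain ⟨-, B, C, hBC⟩ := h1
    refine ⟨hA, fun i => B i 0, fun j => C 0 j, fun i j => ?_⟩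
    rw [hBC]
    simp [Matrix.mul_apply]
  · rintro ⟨hA, b, c, h⟩
    rw [matRank, if_neg hA]
    have hmem : 1 ∈ {k : ℕ | 0 < k ∧
        ∃ (B : Matrix (Fin m) (Fin k) S) (C : Matrix (Fin k) (Fin n) S), A = B * C} := by
      refine ⟨one_pos, Matrix.of (fun i (_ : Fin 1) => b i),
        Matrix.of (fun (_ : Fin 1) j => c j), ?_⟩
      ext i j
      simp [Matrix.mul_apply, h]
    exact le_antisymm (Nat.sInf_le hmem) (le_csInf ⟨1, hmem⟩ fun k hk => hk.1)

private lemma add_eq_zero_left' (haddidem : ∀ a : S, a + a = a) {a b : S}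
    (h : a + b = 0) : a = 0 := by
  calc a = a + 0 := (add_zero a).symm
  _ = a + (a + b) := by rw [h]
  _ = (a + a) + b := (add_assoc a a b).symm
  _ = a + b := by rw [haddidem]
  _ = 0 := h

private lemma sum_term_zero (haddidem : ∀ a : S, a + a = a) {ι : Type*} {s : Finset ι}
    {f : ι → S} (h : ∑ x ∈ s, f x = 0) {a : ι} (ha : a ∈ s) : f a = 0 := by
  have h2 := Finset.add_sum_erase s f ha
  rw [h] at h2
  exact add_eq_zero_left' haddidem h2

private lemma sum_isUnit [Nontrivial S]
    (haui : ∀ a b : S, IsUnit (a + b) → IsUnit a ∨ IsUnit b) {ι : Type*} (s : Finset ι)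
    (f : ι → S) (h : IsUnit (∑ x ∈ s, f x)) : ∃ a ∈ s, IsUnit (f a) := by
  induction s using Finset.cons_induction with
  | empty =>
    rw [Finset.sum_empty] at h
    exact absurd (isUnit_zero_iff.mp h) zero_ne_one
  | cons a s hmem ih =>
    rw [Finset.sum_cons] at h
    rcases haui _ _ h with h' | h'
    · exact ⟨a, Finset.mem_cons_self a s, h'⟩
    · obtain ⟨b, hb, hub⟩ := ih h'
      exact ⟨b, Finset.mem_cons_of_mem hb, hub⟩

private lemma ite_and_eq_mul (p q : Prop) [Decidable p] [Decidable q] :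
    (if p ∧ q then (1:S) else 0) = (if p then 1 else 0) * (if q then 1 else 0) := by
  by_cases hp : p <;> by_cases hq : q <;> simp [hp, hq]

private lemma rank_cell [Nontrivial S] (i : Fin m) (j : Fin n) :
    matRank (Matrix.single i j (1:S)) = 1 := by
  rw [rank_one_iff]
  constructor
  · intro h0
    have h := congrFun (congrFun h0 i) j
    rw [std_apply, if_pos ⟨rfl, rfl⟩] at h
    exact one_ne_zero h
  · refine ⟨fun k => if i = k then 1 else 0, fun l => if j = l then 1 else 0, fun k l => ?_⟩
    rw [std_apply, ite_and_eq_mul]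

private lemma rank_line [Nontrivial S] (haddidem : ∀ a : S, a + a = a)
    (i i' : Fin m) (j j' : Fin n) (hline : i = i' ∨ j = j') :
    matRank (Matrix.single i j (1:S) + Matrix.single i' j' 1) = 1 := by
  rw [rank_one_iff]
  constructor
  · intro h0
    have h := congrFun (congrFun h0 i) j
    rw [Matrix.add_apply, std_apply, std_apply, if_pos ⟨rfl, rfl⟩] at h
    by_cases hc : i' = i ∧ j' = j
    · rw [if_pos hc, haddidem] at h; exact one_ne_zero h
    · rw [if_neg hc, add_zero] at h; exact one_ne_zero h
  · rcases hline with rfl | rfl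
    · refine ⟨fun k => if i = k then 1 else 0,
        fun l => (if j = l then 1 else 0) + (if j' = l then 1 else 0), fun k l => ?_⟩
      rw [Matrix.add_apply, std_apply, std_apply, mul_add, ← ite_and_eq_mul, ← ite_and_eq_mul]
    · refine ⟨fun k => (if i = k then 1 else 0) + (if i' = k then 1 else 0),
        fun l => if j = l then 1 else 0, fun k l => ?_⟩
      rw [Matrix.add_apply, std_apply, std_apply, add_mul, ← ite_and_eq_mul, ← ite_and_eq_mul]

end Aux

theorem stmt9 {S : Type*} [CommSemiring S]
    (haddidem : ∀ a : S, a + a = a)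
    (hmc : ∀ a b c : S, a ≠ 0 → b * a = c * a → b = c)
    (haui : ∀ a b : S, IsUnit (a + b) → IsUnit a ∨ IsUnit b)
    {m n : ℕ}
    (T : Matrix (Fin m) (Fin n) S →ₗ[S] Matrix (Fin m) (Fin n) S)
    (hbij : Function.Bijective T)
    (h1 : ∀ A : Matrix (Fin m) (Fin n) S, matRank A = 1 → matRank (T A) = 1) :
    ∃ (ρ : Equiv.Perm (Fin m)) (σ : Equiv.Perm (Fin n)) (α : Fin m → Fin n → S),
      (∀ i j, IsUnit (α i j)) ∧
      ((∀ (i : Fin m) (j : Fin n),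
          T (Matrix.single i j 1) = α i j • Matrix.single (ρ i) (σ j) 1) ∨
       (∃ h : m = n, ∀ (i : Fin m) (j : Fin n),
          T (Matrix.single i j 1) =
            α i j • Matrix.single (Fin.cast h.symm (σ j)) (Fin.cast h (ρ i)) 1)) := by
  by_cases htriv : Nontrivial S
  case neg =>
    haveI hsub : Subsingleton S := not_nontrivial_iff_subsingleton.mp htriv
    haveI : Subsingleton (Matrix (Fin m) (Fin n) S) :=
      ⟨fun A B => by ext i j; exact Subsingleton.elim _ _⟩
    exact ⟨1, 1, fun _ _ => 1, fun _ _ => isUnit_one, Or.inl fun i j => Subsingleton.elim _ _⟩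
  case pos =>
  haveI := htriv
  have hnzd : ∀ a b : S, a * b = 0 → b ≠ 0 → a = 0 := by
    intro a b h hb
    exact hmc b a 0 hb (by rw [h, zero_mul])
  have hucancel : ∀ u x : S, IsUnit u → u * x = 0 → x = 0 := by
    intro u x hu h
    exact hnzd x u (by rw [mul_comm]; exact h) hu.ne_zero
  -- decomposition of T
  have hdecomp : ∀ A : Matrix (Fin m) (Fin n) S, ∀ k l,
      (T A) k l = ∑ pr : Fin m × Fin n,
        A pr.1 pr.2 * (T (Matrix.single pr.1 pr.2 1)) k l := by
    intro A k l
    have hA : A = ∑ pr : Fin m × Fin n, A pr.1 pr.2 • Matrix.single pr.1 pr.2 1 := by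
      rw [Fintype.sum_prod_type]
      conv_lhs => rw [Matrix.matrix_eq_sum_single A]
      refine Finset.sum_congr rfl fun i _ => Finset.sum_congr rfl fun j _ => ?_
      rw [Matrix.smul_single, smul_eq_mul, mul_one]
    conv_lhs => rw [hA]
    rw [map_sum, Matrix.sum_apply]
    refine Finset.sum_congr rfl fun pr _ => ?_
    rw [map_smul, Matrix.smul_apply, smul_eq_mul]
  -- every cell is hit by a unit multiple of a cell
  have hexist : ∀ pq : Fin m × Fin n, ∃ ij : Fin m × Fin n, ∃ α : S, IsUnit α ∧
      T (Matrix.single ij.1 ij.2 1) = α • Matrix.single pq.1 pq.2 1 := by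
    rintro ⟨p, q⟩
    obtain ⟨A, hA⟩ := hbij.2 (Matrix.single p q 1)
    have hsum : ∀ k l, ∑ pr : Fin m × Fin n,
        A pr.1 pr.2 * (T (Matrix.single pr.1 pr.2 1)) k l
        = Matrix.single p q (1:S) k l := by
      intro k l
      rw [← hdecomp A k l, hA]
    have hu : IsUnit (∑ pr : Fin m × Fin n,
        A pr.1 pr.2 * (T (Matrix.single pr.1 pr.2 1)) p q) := by
      rw [hsum p q, std_apply, if_pos ⟨rfl, rfl⟩]
      exact isUnit_one
    obtain ⟨ij, -, hij⟩ := sum_isUnit haui Finset.univ _ hu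
    have ha : IsUnit (A ij.1 ij.2) := isUnit_of_mul_isUnit_left hij
    have hα : IsUnit ((T (Matrix.single ij.1 ij.2 1)) p q) :=
      isUnit_of_mul_isUnit_right hij
    refine ⟨ij, _, hα, ?_⟩
    ext k l
    rw [Matrix.smul_apply, std_apply, smul_eq_mul]
    by_cases hkl : p = k ∧ q = l
    · obtain ⟨rfl, rfl⟩ := hkl
      rw [if_pos ⟨rfl, rfl⟩, mul_one]
    · rw [if_neg hkl, mul_zero]
      have h0 : ∑ pr : Fin m × Fin n,
          A pr.1 pr.2 * (T (Matrix.single pr.1 pr.2 1)) k l = 0 := by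
        rw [hsum k l, std_apply, if_neg hkl]
      exact hucancel _ _ ha (sum_term_zero haddidem h0 (Finset.mem_univ ij))
  choose g β hβ hTg using hexist
  have hginj : Function.Injective g := by
    intro x y hgxy
    have h2 := hTg y
    rw [← hgxy, hTg x] at h2
    have h3 := congrFun (congrFun h2 x.1) x.2
    rw [Matrix.smul_apply, Matrix.smul_apply, std_apply, std_apply, if_pos ⟨rfl, rfl⟩] at h3
    by_cases hxy : y.1 = x.1 ∧ y.2 = x.2
    · exact Prod.ext hxy.1.symm hxy.2.symm
    · rw [if_neg hxy, smul_eq_mul, smul_eq_mul, mul_one, mul_zero] at h3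
      exact absurd h3 (hβ x).ne_zero
  have hsurj : Function.Surjective g := Finite.injective_iff_surjective.mp hginj
  choose π hπ using hsurj
  have hπinj : Function.Injective π := fun x y h => by rw [← hπ x, ← hπ y, h]
  have hT : ∀ (i : Fin m) (j : Fin n), T (Matrix.single i j 1) =
      β (π (i,j)) • Matrix.single (π (i,j)).1 (π (i,j)).2 1 := by
    intro i j
    have h := hTg (π (i,j))
    rw [hπ (i,j)] at h
    exact h
  -- collinearity
  have hcoll : ∀ (i i' : Fin m) (j j' : Fin n), (i,j) ≠ ((i',j') : Fin m × Fin n) →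
      (i = i' ∨ j = j') →
      (π (i,j)).1 = (π (i',j')).1 ∨ (π (i,j)).2 = (π (i',j')).2 := by
    intro i i' j j' hne hline
    have hr := h1 _ (rank_line haddidem i i' j j' hline)
    rw [map_add, hT i j, hT i' j', rank_one_iff] at hr
    obtain ⟨-, b, c, hbc⟩ := hr
    set P := (π (i,j)).1 with hP'
    set Q := (π (i,j)).2 with hQ'
    set P' := (π (i',j')).1 with hP''
    set Q' := (π (i',j')).2 with hQ''
    by_contra hcon
    push_neg at hcon
    obtain ⟨hP, hQ⟩ := hcon
    have e1 := hbc P Q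
    rw [Matrix.add_apply, Matrix.smul_apply, Matrix.smul_apply, std_apply, std_apply,
      if_pos ⟨rfl, rfl⟩, if_neg (fun hc => hP hc.1.symm), smul_eq_mul, smul_eq_mul,
      mul_one, mul_zero, add_zero] at e1
    have e2 := hbc P' Q'
    rw [Matrix.add_apply, Matrix.smul_apply, Matrix.smul_apply, std_apply, std_apply,
      if_neg (fun hc => hP hc.1), if_pos ⟨rfl, rfl⟩, smul_eq_mul, smul_eq_mul,
      mul_one, mul_zero, zero_add] at e2
    have e3 := hbc P Q'
    rw [Matrix.add_apply, Matrix.smul_apply, Matrix.smul_apply, std_apply, std_apply,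
      if_neg (fun hc => hQ hc.2), if_neg (fun hc => hP hc.1.symm), smul_eq_mul, smul_eq_mul,
      mul_zero, mul_zero, add_zero] at e3
    have hbP : b P ≠ 0 := fun h => (hβ (π (i,j))).ne_zero (by rw [e1, h, zero_mul])
    have hcQ' : c Q' ≠ 0 := fun h => (hβ (π (i',j'))).ne_zero (by rw [e2, h, mul_zero])
    exact hbP (hnzd _ _ e3.symm hcQ')
  have hrow : ∀ i j j', (π (i,j)).1 = (π (i,j')).1 ∨ (π (i,j)).2 = (π (i,j')).2 := by
    intro i j j'
    by_cases h : j = j'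
    · subst h; left; rfl
    · exact hcoll i i j j' (fun hc => h (congrArg Prod.snd hc)) (Or.inl rfl)
  have hcol : ∀ i i' j, (π (i,j)).1 = (π (i',j)).1 ∨ (π (i,j)).2 = (π (i',j)).2 := by
    intro i i' j
    by_cases h : i = i'
    · subst h; left; rfl
    · exact hcoll i i' j j (fun hc => h (congrArg Prod.fst hc)) (Or.inr rfl)
  rcases combi π hπinj hrow hcol with ⟨ρ, σ, hπeq⟩ | ⟨h, ρ, σ, hπeq⟩
  · refine ⟨ρ, σ, fun i j => β (ρ i, σ j), fun i j => hβ _, Or.inl fun i j => ?_⟩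
    have heq := hT i j
    rw [hπeq i j] at heq
    exact heq
  · refine ⟨ρ, σ, fun i j => β (Fin.cast h.symm (σ j), Fin.cast h (ρ i)),
      fun i j => hβ _, Or.inr ⟨h, fun i j => ?_⟩⟩
    have heq := hT i j
    rw [hπeq i j] at heq
    exact heq
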